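/- Let J_C be a neural ideal. If the canonical form CF(J_C) is a Gröbner basis of J_C (for some monomial ordering), then it is a reduced Gröbner basis: no term of any f ∈ CF(J_C) is divisible by the leading term of any other g ∈ CF(J_C). -/

import Mathlib

open MvPolynomial

universe u

/-- The pseudo-monomial `x_σ * ∏_{j ∈ τ} (1 + x_j)` in `F₂[x₁,…,xₙ]`. -/
noncomputable def psm {n : ℕ} (σ τ : Finset (Fin n)) : MvPolynomial (Fin n) (ZMod 2) :=
  (∏ i ∈ σ, X i) * ∏ j ∈ τ, (1 + X j)

/-- A polynomial is a pseudo-monomial if it equals `psm σ τ` for disjoint `σ τ`. -/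
def IsPseudoMonomial {n : ℕ} (f : MvPolynomial (Fin n) (ZMod 2)) : Prop :=
  ∃ σ τ : Finset (Fin n), Disjoint σ τ ∧ f = psm σ τ

/-- The characteristic polynomial `ρ_v = ∏ i (1 - v_i - x_i)` of a point `v ∈ {0,1}ⁿ`. -/
noncomputable def rho {n : ℕ} (v : Fin n → ZMod 2) : MvPolynomial (Fin n) (ZMod 2) :=
  ∏ i, (1 - C (v i) - X i)

/-- The neural ideal `J_C` of a code `Co ⊆ {0,1}ⁿ`. -/
noncomputable def neuralIdeal {n : ℕ} (Co : Set (Fin n → ZMod 2)) :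
    Ideal (MvPolynomial (Fin n) (ZMod 2)) :=
  Ideal.span {p | ∃ v, v ∉ Co ∧ p = rho v}

/-- The canonical form: the set of minimal pseudo-monomials of an ideal. -/
def canonicalForm {n : ℕ} (J : Ideal (MvPolynomial (Fin n) (ZMod 2))) :
    Set (MvPolynomial (Fin n) (ZMod 2)) :=
  {f | IsPseudoMonomial f ∧ f ∈ J ∧
    ∀ g : MvPolynomial (Fin n) (ZMod 2), IsPseudoMonomial g → g ∈ J → g ∣ f → g = f}

/-- The multidegree (exponent of the leading term) of `f` w.r.t. a monomial order `m`. -/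
noncomputable def leadDeg {n : ℕ} (m : MonomialOrder.{0,u} (Fin n))
    (f : MvPolynomial (Fin n) (ZMod 2)) : Fin n →₀ ℕ :=
  m.toSyn.symm (f.support.sup (fun d => m.toSyn d))

/-- The exponent vector of the square-free monomial `x_ω`. -/
noncomputable def expOf {n : ℕ} (ω : Finset (Fin n)) : Fin n →₀ ℕ :=
  ∑ i ∈ ω, Finsupp.single i 1

/-- `G` is a Gröbner basis of `J` w.r.t. the monomial order `m`: a finite subset of `J`
whose leading terms generate the leading term ideal, i.e. the leading term of every nonzero
element of `J` is divisible by the leading term of some element of `G`. -/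
def IsGB {n : ℕ} (m : MonomialOrder.{0,u} (Fin n)) (J : Ideal (MvPolynomial (Fin n) (ZMod 2)))
    (G : Set (MvPolynomial (Fin n) (ZMod 2))) : Prop :=
  G.Finite ∧ G ⊆ (J : Set (MvPolynomial (Fin n) (ZMod 2))) ∧
    ∀ f ∈ J, f ≠ 0 → ∃ g ∈ G, g ≠ 0 ∧ leadDeg m g ≤ leadDeg m f

/-- A reduced Gröbner basis: every element has leading coefficient 1, and no term of any
element is divisible by the leading term of another element. -/
def IsReducedGB {n : ℕ} (m : MonomialOrder.{0,u} (Fin n))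
    (J : Ideal (MvPolynomial (Fin n) (ZMod 2)))
    (G : Set (MvPolynomial (Fin n) (ZMod 2))) : Prop :=
  IsGB m J G ∧ (∀ g ∈ G, coeff (leadDeg m g) g = 1) ∧
    ∀ f ∈ G, ∀ g ∈ G, g ≠ f → ∀ d ∈ f.support, ¬ leadDeg m g ≤ d

/-- The universal Gröbner basis: the union of all reduced Gröbner bases. -/
def universalGB {n : ℕ} (J : Ideal (MvPolynomial (Fin n) (ZMod 2))) :
    Set (MvPolynomial (Fin n) (ZMod 2)) :=
  {f | ∃ (m : MonomialOrder.{0,u} (Fin n)) (G : Set (MvPolynomial (Fin n) (ZMod 2))),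
    IsReducedGB m J G ∧ f ∈ G}

/-- The receptive field code of a family of sets `U i` in a stimulus space `S`. -/
def rfCode {n : ℕ} {S : Type} (U : Fin n → Set S) : Set (Fin n → ZMod 2) :=
  {c | ((⋂ i ∈ {i : Fin n | c i = 1}, U i) \ ⋃ j ∈ {j : Fin n | c j = 0}, U j).Nonempty}

lemma zmod2_eq_one : ∀ a : ZMod 2, a ≠ 0 → a = 1 := by decide

lemma expOf_apply {n : ℕ} (ω : Finset (Fin n)) (i : Fin n) :
    expOf ω i = if i ∈ ω then 1 else 0 := by
  classical
  simp [expOf, Finsupp.finset_sum_apply, Finsupp.single_apply]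

lemma expOf_le_iff {n : ℕ} {A B : Finset (Fin n)} : expOf A ≤ expOf B ↔ A ⊆ B := by
  constructor
  · intro h i hi
    have := (Finsupp.le_def.mp h) i
    rw [expOf_apply, expOf_apply, if_pos hi] at this
    by_contra hB
    rw [if_neg hB] at this; omega
  · intro h
    rw [Finsupp.le_def]
    intro i
    rw [expOf_apply, expOf_apply]
    by_cases hi : i ∈ A
    · rw [if_pos hi, if_pos (h hi)]
    · simp [hi]

lemma expOf_injective {n : ℕ} : Function.Injective (expOf (n := n)) := by
  intro A B h
  exact Finset.Subset.antisymm (expOf_le_iff.mp h.le) (expOf_le_iff.mp h.ge)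

lemma expOf_union {n : ℕ} {A B : Finset (Fin n)} (h : Disjoint A B) :
    expOf (A ∪ B) = expOf A + expOf B := by
  rw [expOf, Finset.sum_union h]; rfl

lemma prod_X_eq {n : ℕ} (s : Finset (Fin n)) :
    (∏ i ∈ s, X i : MvPolynomial (Fin n) (ZMod 2)) = monomial (expOf s) 1 := by
  classical
  induction s using Finset.cons_induction with
  | empty => simp [expOf]
  | cons a s ha ih =>
      have he : expOf (Finset.cons a s ha) = Finsupp.single a 1 + expOf s := by
        simp only [expOf, Finset.sum_cons]
      rw [Finset.prod_cons, ih, X, monomial_mul, one_mul, he]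

lemma psm_eq_sum {n : ℕ} {σ τ : Finset (Fin n)} (h : Disjoint σ τ) :
    psm σ τ = ∑ T ∈ τ.powerset, monomial (expOf (σ ∪ T)) 1 := by
  classical
  have h1 : (∏ j ∈ τ, (1 + X j) : MvPolynomial (Fin n) (ZMod 2))
      = ∑ T ∈ τ.powerset, ∏ i ∈ T, X i := by
    rw [show (∏ j ∈ τ, (1 + X j) : MvPolynomial (Fin n) (ZMod 2))
        = ∏ j ∈ τ, (X j + 1) from Finset.prod_congr rfl (fun _ _ => add_comm _ _),
      Finset.prod_add]
    refine Finset.sum_congr rfl fun T hT => ?_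
    simp
  rw [psm, h1, Finset.mul_sum]
  refine Finset.sum_congr rfl fun T hT => ?_
  rw [prod_X_eq, prod_X_eq, monomial_mul, one_mul,
    expOf_union (h.mono_right (Finset.mem_powerset.mp hT))]

lemma union_inj_on {n : ℕ} {σ τ : Finset (Fin n)} (h : Disjoint σ τ)
    {T T' : Finset (Fin n)} (hT : T ⊆ τ) (hT' : T' ⊆ τ) (he : σ ∪ T = σ ∪ T') : T = T' := by
  have key : ∀ {A B : Finset (Fin n)}, A ⊆ τ → B ⊆ τ → σ ∪ A = σ ∪ B → A ⊆ B := by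
    intro A B hA hB hAB i hi
    have : i ∈ σ ∪ B := hAB ▸ Finset.mem_union_right _ hi
    rcases Finset.mem_union.mp this with h' | h'
    · exact absurd h' (Finset.disjoint_right.mp h (hA hi))
    · exact h'
  exact Finset.Subset.antisymm (key hT hT' he) (key hT' hT he.symm)

lemma coeff_psm_top {n : ℕ} {σ τ : Finset (Fin n)} (h : Disjoint σ τ) :
    coeff (expOf (σ ∪ τ)) (psm σ τ) = 1 := by
  classical
  rw [psm_eq_sum h, coeff_sum]
  rw [Finset.sum_eq_single τ]
  · simp [coeff_monomial]
  · intro T hT hne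
    rw [coeff_monomial, if_neg]
    intro he
    exact hne (union_inj_on h (Finset.mem_powerset.mp hT) le_rfl (expOf_injective he))
  · intro hτ
    exact absurd (Finset.mem_powerset_self τ) hτ

lemma psm_ne_zero {n : ℕ} {σ τ : Finset (Fin n)} (h : Disjoint σ τ) : psm σ τ ≠ 0 := by
  intro h0
  have := coeff_psm_top h
  rw [h0, coeff_zero] at this
  exact one_ne_zero this.symm

lemma support_psm {n : ℕ} {σ τ : Finset (Fin n)} (h : Disjoint σ τ) {d : Fin n →₀ ℕ}
    (hd : d ∈ (psm σ τ).support) : ∃ T ⊆ τ, d = expOf (σ ∪ T) := by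
  classical
  rw [psm_eq_sum h] at hd
  have := MvPolynomial.support_sum hd
  rcases Finset.mem_biUnion.mp this with ⟨T, hT, hdT⟩
  rw [support_monomial, if_neg one_ne_zero] at hdT
  exact ⟨T, Finset.mem_powerset.mp hT, (Finset.mem_singleton.mp hdT)⟩

lemma leadDeg_mem_support {n : ℕ} (m : MonomialOrder.{0,u} (Fin n))
    {f : MvPolynomial (Fin n) (ZMod 2)} (hf : f ≠ 0) : leadDeg m f ∈ f.support := by
  obtain ⟨d, hd, he⟩ := Finset.exists_mem_eq_sup f.support
    (Finset.nonempty_iff_ne_empty.mpr (mt MvPolynomial.support_eq_empty.mp hf)) (fun d => m.toSyn d)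
  rw [leadDeg, he, AddEquiv.symm_apply_apply]
  exact hd

lemma le_leadDeg {n : ℕ} (m : MonomialOrder.{0,u} (Fin n))
    {f : MvPolynomial (Fin n) (ZMod 2)} {d : Fin n →₀ ℕ} (hd : d ∈ f.support) :
    m.toSyn d ≤ m.toSyn (leadDeg m f) := by
  rw [leadDeg, AddEquiv.apply_symm_apply]
  exact Finset.le_sup (f := fun d => m.toSyn d) hd

lemma leadDeg_psm {n : ℕ} (m : MonomialOrder.{0,u} (Fin n)) {σ τ : Finset (Fin n)}
    (h : Disjoint σ τ) : leadDeg m (psm σ τ) = expOf (σ ∪ τ) := by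
  have h1 : m.toSyn (leadDeg m (psm σ τ)) ≤ m.toSyn (expOf (σ ∪ τ)) := by
    obtain ⟨T, hT, he⟩ := support_psm h (leadDeg_mem_support m (psm_ne_zero h))
    rw [he]
    exact m.toSyn_monotone (expOf_le_iff.mpr (Finset.union_subset_union le_rfl hT))
  have h2 : m.toSyn (expOf (σ ∪ τ)) ≤ m.toSyn (leadDeg m (psm σ τ)) := by
    apply le_leadDeg
    rw [MvPolynomial.mem_support_iff, coeff_psm_top h]
    exact one_ne_zero
  exact m.toSyn.injective (le_antisymm h1 h2)

lemma monomial_mul_psm {n : ℕ} {A σ τ : Finset (Fin n)} (h : Disjoint A σ) :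
    (monomial (expOf A) 1 : MvPolynomial (Fin n) (ZMod 2)) * psm σ τ = psm (A ∪ σ) τ := by
  rw [psm, psm, ← mul_assoc, ← prod_X_eq, ← Finset.prod_union h]

lemma psm_mul_psm {n : ℕ} {σ τ σ' τ' : Finset (Fin n)} (hσ : σ' ⊆ σ) (hτ : τ' ⊆ τ) :
    psm σ' τ' * psm (σ \ σ') (τ \ τ') = psm σ τ := by
  classical
  rw [psm, psm, psm, mul_mul_mul_comm, ← Finset.prod_union Finset.disjoint_sdiff,
    ← Finset.prod_union Finset.disjoint_sdiff, Finset.union_sdiff_of_subset hσ,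
    Finset.union_sdiff_of_subset hτ]

lemma psm_dvd {n : ℕ} {σ τ σ' τ' : Finset (Fin n)} (hσ : σ' ⊆ σ) (hτ : τ' ⊆ τ) :
    psm σ' τ' ∣ psm σ τ := ⟨psm (σ \ σ') (τ \ τ'), (psm_mul_psm hσ hτ).symm⟩

lemma eval_psm_indicator {n : ℕ} {σ τ : Finset (Fin n)} (h : Disjoint σ τ) :
    eval (fun i => if i ∈ σ then (1 : ZMod 2) else 0) (psm σ τ) = 1 := by
  rw [psm, map_mul, eval_prod, eval_prod]
  have h1 : ∀ i ∈ σ, eval (fun i => if i ∈ σ then (1 : ZMod 2) else 0) (X i) = 1 := by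
    intro i hi; simp [hi]
  have h2 : ∀ j ∈ τ, eval (fun i => if i ∈ σ then (1 : ZMod 2) else 0) (1 + X j) = 1 := by
    intro j hj
    have : j ∉ σ := Finset.disjoint_right.mp h hj
    simp [this]
  rw [Finset.prod_congr rfl h1, Finset.prod_congr rfl h2]
  simp

lemma eval_psm_ne_zero {n : ℕ} {σ' τ' σ : Finset (Fin n)}
    (h : eval (fun i => if i ∈ σ then (1 : ZMod 2) else 0) (psm σ' τ') ≠ 0) :
    σ' ⊆ σ ∧ Disjoint τ' σ := by
  rw [psm, map_mul, eval_prod, eval_prod] at h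
  have h1 := fun a ha => Finset.prod_ne_zero_iff.mp (left_ne_zero_of_mul h) a ha
  have h2 := fun a ha => Finset.prod_ne_zero_iff.mp (right_ne_zero_of_mul h) a ha
  constructor
  · intro i hi
    have := h1 i hi
    simp only [eval_X] at this
    by_contra hc
    rw [if_neg hc] at this
    exact this rfl
  · rw [Finset.disjoint_left]
    intro j hj hjσ
    have := h2 j hj
    simp only [map_add, map_one, eval_X, if_pos hjσ] at this
    exact this (by decide)

lemma mvpoly_add_self {n : ℕ} (p : MvPolynomial (Fin n) (ZMod 2)) : p + p = 0 := by
  have h2 : ∀ a : ZMod 2, a + a = 0 := by decide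
  ext d
  rw [coeff_add, coeff_zero, h2]

lemma reduce_lemma {n : ℕ} (m : MonomialOrder.{0,u} (Fin n))
    (J : Ideal (MvPolynomial (Fin n) (ZMod 2))) (G : Set (MvPolynomial (Fin n) (ZMod 2)))
    (hGpsm : ∀ g ∈ G, IsPseudoMonomial g) (hGJ : G ⊆ (J : Set (MvPolynomial (Fin n) (ZMod 2))))
    (hGB : ∀ r ∈ J, r ≠ 0 → ∃ g ∈ G, g ≠ 0 ∧ leadDeg m g ≤ leadDeg m r)
    (f : MvPolynomial (Fin n) (ZMod 2)) (E : Finset (Fin n)) (hfE : leadDeg m f = expOf E) :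
    ∀ (k : ℕ) (r : MvPolynomial (Fin n) (ZMod 2)), r ∈ J →
      (∀ d ∈ r.support, ∃ W, W ⊆ E ∧ W ≠ E ∧ d = expOf W) →
      ((E.powerset.filter (fun W => m.toSyn (expOf W) ≤ m.toSyn (leadDeg m r))).card ≤ k) →
      r ∈ AddSubmonoid.closure {p | ∃ g' A, g' ∈ G ∧ g' ≠ f ∧
        leadDeg m g' ≤ expOf E ∧ p = monomial (expOf A) (1 : ZMod 2) * g'} := by
  classical
  intro k
  induction k with
  | zero =>
      intro r hrJ hsup hcard
      by_cases hr0 : r = 0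
      · rw [hr0]; exact AddSubmonoid.zero_mem _
      · exfalso
        obtain ⟨W₀, hW₀E, hW₀ne, hW₀⟩ := hsup _ (leadDeg_mem_support m hr0)
        have hmem : W₀ ∈ E.powerset.filter
            (fun W => m.toSyn (expOf W) ≤ m.toSyn (leadDeg m r)) := by
          rw [Finset.mem_filter, Finset.mem_powerset]
          exact ⟨hW₀E, by rw [hW₀]⟩
        have := Finset.card_pos.mpr ⟨W₀, hmem⟩
        omega
  | succ k ih =>
      intro r hrJ hsup hcard
      by_cases hr0 : r = 0
      · rw [hr0]; exact AddSubmonoid.zero_mem _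
      obtain ⟨W₀, hW₀E, hW₀ne, hW₀⟩ := hsup _ (leadDeg_mem_support m hr0)
      obtain ⟨g', hg'G, hg'0, hg'le⟩ := hGB r hrJ hr0
      obtain ⟨σ', τ', hdisj', hg'⟩ := hGpsm g' hg'G
      have hldg' : leadDeg m g' = expOf (σ' ∪ τ') := by rw [hg', leadDeg_psm m hdisj']
      have htot : σ' ∪ τ' ⊆ W₀ := by
        rw [hldg', hW₀] at hg'le
        exact expOf_le_iff.mp hg'le
      have hg'f : g' ≠ f := by
        intro he
        apply hW₀ne
        have : expOf E = expOf (σ' ∪ τ') := by rw [← hfE, ← he, hldg']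
        have hE : E = σ' ∪ τ' := expOf_injective this
        exact Finset.Subset.antisymm hW₀E (hE ▸ htot)
      set A := W₀ \ (σ' ∪ τ') with hA
      have hAdisj : Disjoint A (σ' ∪ τ') := Finset.sdiff_disjoint
      set q : MvPolynomial (Fin n) (ZMod 2) := monomial (expOf A) 1 * g' with hqdef
      have hq_eq : q = psm (A ∪ σ') τ' := by
        rw [hqdef, hg', monomial_mul_psm (hAdisj.mono_right Finset.subset_union_left)]
      have hAuni : (A ∪ σ') ∪ τ' = W₀ := by
        rw [Finset.union_assoc, Finset.sdiff_union_of_subset htot]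
      have hdisj2 : Disjoint (A ∪ σ') τ' :=
        Finset.disjoint_union_left.mpr
          ⟨hAdisj.mono_right Finset.subset_union_right, hdisj'⟩
      have hqcoeff : coeff (expOf W₀) q = 1 := by
        rw [hq_eq, ← hAuni, coeff_psm_top hdisj2]
      have hqsupp : ∀ d ∈ q.support, ∃ W, W ⊆ W₀ ∧ d = expOf W := by
        intro d hd
        rw [hq_eq] at hd
        obtain ⟨T, hT, hdT⟩ := support_psm hdisj2 hd
        refine ⟨(A ∪ σ') ∪ T, ?_, hdT⟩
        rw [← hAuni]
        exact Finset.union_subset_union le_rfl hT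
      have hgen : q ∈ {p | ∃ g' A, g' ∈ G ∧ g' ≠ f ∧
          leadDeg m g' ≤ expOf E ∧ p = monomial (expOf A) (1 : ZMod 2) * g'} := by
        refine ⟨g', A, hg'G, hg'f, ?_, rfl⟩
        rw [hldg']
        exact expOf_le_iff.mpr (htot.trans hW₀E)
      set r' : MvPolynomial (Fin n) (ZMod 2) := r + q with hr'def
      have hr'J : r' ∈ J := J.add_mem hrJ (J.mul_mem_left _ (hGJ hg'G))
      have hrr : r = r' + q := by
        rw [hr'def, add_assoc, mvpoly_add_self, add_zero]
      have hcoeff0 : coeff (expOf W₀) r' = 0 := by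
        have h1 : coeff (expOf W₀) r = 1 := by
          apply zmod2_eq_one
          rw [← hW₀]
          exact MvPolynomial.mem_support_iff.mp (leadDeg_mem_support m hr0)
        rw [hr'def, coeff_add, h1, hqcoeff]
        decide
      by_cases hr'0 : r' = 0
      · rw [hrr, hr'0, zero_add]
        exact AddSubmonoid.subset_closure hgen
      have hr'supp : ∀ d ∈ r'.support, ∃ W, W ⊆ E ∧ W ≠ E ∧ d = expOf W := by
        intro d hd
        rcases Finset.mem_union.mp (MvPolynomial.support_add hd) with h' | h'
        · exact hsup d h'
        · obtain ⟨W, hW, hdW⟩ := hqsupp d h'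
          refine ⟨W, hW.trans hW₀E, ?_, hdW⟩
          intro he
          exact hW₀ne (Finset.Subset.antisymm hW₀E (he ▸ hW))
      have hub : ∀ d ∈ r'.support, m.toSyn d ≤ m.toSyn (leadDeg m r) := by
        intro d hd
        rcases Finset.mem_union.mp (MvPolynomial.support_add hd) with h' | h'
        · exact le_leadDeg m h'
        · obtain ⟨W, hW, hdW⟩ := hqsupp d h'
          rw [hdW, hW₀]
          exact m.toSyn_monotone (expOf_le_iff.mpr hW)
      have hlt : m.toSyn (leadDeg m r') < m.toSyn (leadDeg m r) := by
        have hmem := leadDeg_mem_support m hr'0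
        refine lt_of_le_of_ne (hub _ hmem) ?_
        intro he
        have : leadDeg m r' = leadDeg m r := m.toSyn.injective he
        rw [this, hW₀] at hmem
        exact MvPolynomial.mem_support_iff.mp hmem hcoeff0
      have hcard' : (E.powerset.filter
          (fun W => m.toSyn (expOf W) ≤ m.toSyn (leadDeg m r'))).card ≤ k := by
        have hss : E.powerset.filter (fun W => m.toSyn (expOf W) ≤ m.toSyn (leadDeg m r'))
            ⊂ E.powerset.filter (fun W => m.toSyn (expOf W) ≤ m.toSyn (leadDeg m r)) := by
          constructor
          · intro W hW
            rw [Finset.mem_filter] at hW ⊢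
            exact ⟨hW.1, hW.2.trans hlt.le⟩
          · intro hsub
            have hmem : W₀ ∈ E.powerset.filter
                (fun W => m.toSyn (expOf W) ≤ m.toSyn (leadDeg m r)) := by
              rw [Finset.mem_filter, Finset.mem_powerset]
              exact ⟨hW₀E, by rw [hW₀]⟩
            have := (Finset.mem_filter.mp (hsub hmem)).2
            rw [← hW₀] at this
            exact absurd (lt_of_le_of_lt this hlt) (lt_irrefl _)
        have := Finset.card_lt_card hss
        omega
      rw [hrr]
      exact AddSubmonoid.add_mem _ (ih r' hr'J hr'supp hcard') (AddSubmonoid.subset_closure hgen)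

theorem stmt10' {n : ℕ} (J : Ideal (MvPolynomial (Fin n) (ZMod 2)))
    (m : MonomialOrder.{0,u} (Fin n))
    (h : IsGB m J (canonicalForm J)) : IsReducedGB m J (canonicalForm J) := by
  classical
  obtain ⟨hGfin, hGJ, hGB⟩ := h
  refine ⟨⟨hGfin, hGJ, hGB⟩, ?_, ?_⟩
  · intro g hg
    obtain ⟨⟨σ', τ', hd', hg'⟩, _, _⟩ := hg
    rw [hg', leadDeg_psm m hd', coeff_psm_top hd']
  · intro f hf g hg hgf d hd hle
    obtain ⟨⟨σ, τ, hdisj, hfeq⟩, hfJ, hfmin⟩ := hf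
    obtain ⟨⟨σ', τ', hdisj', hgeq⟩, hgJ, _⟩ := hg
    have hd' : d ∈ (psm σ τ).support := hfeq ▸ hd
    obtain ⟨T, hT, hdT⟩ := support_psm hdisj hd'
    have hldg : leadDeg m g = expOf (σ' ∪ τ') := by rw [hgeq, leadDeg_psm m hdisj']
    set E := σ ∪ τ with hE
    have hsub : σ' ∪ τ' ⊆ E := by
      have h1 : expOf (σ' ∪ τ') ≤ expOf (σ ∪ T) := by rw [← hldg, ← hdT]; exact hle
      exact (expOf_le_iff.mp h1).trans (Finset.union_subset_union le_rfl hT)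
    have hfE : leadDeg m f = expOf E := by rw [hfeq, leadDeg_psm m hdisj]
    set v : Fin n → ZMod 2 := fun i => if i ∈ σ then 1 else 0 with hv
    set Gen : Set (MvPolynomial (Fin n) (ZMod 2)) := {p | ∃ g' A, g' ∈ canonicalForm J ∧
      g' ≠ f ∧ leadDeg m g' ≤ expOf E ∧ p = monomial (expOf A) (1 : ZMod 2) * g'} with hGen
    have hgen0 : ∀ p ∈ Gen, eval v p = 0 := by
      rintro p ⟨g', A, hg'G, hg'f, hg'le, rfl⟩
      obtain ⟨⟨σ₁, τ₁, hd₁, hg₁⟩, hg'J, _⟩ := hg'G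
      rw [map_mul]
      by_contra hne
      have hev : eval v g' ≠ 0 := right_ne_zero_of_mul hne
      rw [hg₁] at hev
      obtain ⟨hσ₁, hτ₁σ⟩ := eval_psm_ne_zero hev
      have hτ₁ : τ₁ ⊆ τ := by
        have htotsub : σ₁ ∪ τ₁ ⊆ E := by
          have h2 : leadDeg m g' = expOf (σ₁ ∪ τ₁) := by rw [hg₁, leadDeg_psm m hd₁]
          exact expOf_le_iff.mp (h2 ▸ hg'le)
        intro j hj
        rcases Finset.mem_union.mp (htotsub (Finset.mem_union_right _ hj)) with h' | h'
        · exact absurd h' (Finset.disjoint_left.mp hτ₁σ hj)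
        · exact h'
      have hdvd : g' ∣ f := by rw [hg₁, hfeq]; exact psm_dvd hσ₁ hτ₁
      exact hg'f (hfmin g' ⟨σ₁, τ₁, hd₁, hg₁⟩ hg'J hdvd)
    -- construct r₀ = f + q₀ and show f ∈ closure Gen
    set A₀ := E \ (σ' ∪ τ') with hA₀
    have hA₀disj : Disjoint A₀ (σ' ∪ τ') := Finset.sdiff_disjoint
    set q₀ : MvPolynomial (Fin n) (ZMod 2) := monomial (expOf A₀) 1 * g with hq₀def
    have hq₀eq : q₀ = psm (A₀ ∪ σ') τ' := by
      rw [hq₀def, hgeq, monomial_mul_psm (hA₀disj.mono_right Finset.subset_union_left)]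
    have hAuni : (A₀ ∪ σ') ∪ τ' = E := by
      rw [Finset.union_assoc, Finset.sdiff_union_of_subset hsub]
    have hdisj2 : Disjoint (A₀ ∪ σ') τ' :=
      Finset.disjoint_union_left.mpr
        ⟨hA₀disj.mono_right Finset.subset_union_right, hdisj'⟩
    have hq₀coeff : coeff (expOf E) q₀ = 1 := by
      rw [hq₀eq, ← hAuni, coeff_psm_top hdisj2]
    have hgen : q₀ ∈ Gen := by
      refine ⟨g, A₀, ⟨⟨σ', τ', hdisj', hgeq⟩, hgJ, ‹_›⟩, hgf, ?_, rfl⟩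
      rw [hldg]
      exact expOf_le_iff.mpr hsub
    set r₀ : MvPolynomial (Fin n) (ZMod 2) := f + q₀ with hr₀def
    have hr₀J : r₀ ∈ J := J.add_mem hfJ (J.mul_mem_left _ hgJ)
    have hcoeff0 : coeff (expOf E) r₀ = 0 := by
      have h1 : coeff (expOf E) f = 1 := by rw [hfeq]; exact coeff_psm_top hdisj
      rw [hr₀def, coeff_add, h1, hq₀coeff]; decide
    have hr₀supp : ∀ d' ∈ r₀.support, ∃ W, W ⊆ E ∧ W ≠ E ∧ d' = expOf W := by
      intro d' hd'
      have hWex : ∃ W, W ⊆ E ∧ d' = expOf W := by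
        rcases Finset.mem_union.mp (MvPolynomial.support_add hd') with h' | h'
        · rw [hfeq] at h'
          obtain ⟨T', hT', he⟩ := support_psm hdisj h'
          exact ⟨σ ∪ T', Finset.union_subset_union le_rfl hT', he⟩
        · rw [hq₀eq] at h'
          obtain ⟨T', hT', he⟩ := support_psm hdisj2 h'
          exact ⟨(A₀ ∪ σ') ∪ T', hAuni ▸ Finset.union_subset_union le_rfl hT', he⟩
      obtain ⟨W, hWE, he⟩ := hWex
      refine ⟨W, hWE, ?_, he⟩
      intro heq
      apply MvPolynomial.mem_support_iff.mp hd'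
      rw [he, heq, hcoeff0]
    have hr₀mem := reduce_lemma m J (canonicalForm J) (fun g hg => hg.1)
      hGJ hGB f E hfE
      ((E.powerset.filter (fun W => m.toSyn (expOf W) ≤ m.toSyn (leadDeg m r₀))).card)
      r₀ hr₀J hr₀supp le_rfl
    have hfmem : f ∈ AddSubmonoid.closure Gen := by
      have hff : f = r₀ + q₀ := by rw [hr₀def, add_assoc, mvpoly_add_self, add_zero]
      rw [hff]
      exact AddSubmonoid.add_mem _ hr₀mem (AddSubmonoid.subset_closure hgen)
    have h0 : eval v f = 0 := by
      refine AddSubmonoid.closure_induction (fun x hx => hgen0 x hx) (by simp)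
        (fun x y _ _ hx hy => by rw [map_add, hx, hy, add_zero]) hfmem
    have h1 : eval v f = 1 := by rw [hfeq]; exact eval_psm_indicator hdisj
    rw [h0] at h1
    exact absurd h1 (by decide)

/-- if the canonical form of a neural ideal is a Gröbner basis, then it is a
reduced Gröbner basis. -/
theorem stmt10 {n : ℕ} (Co : Set (Fin n → ZMod 2)) (m : MonomialOrder.{0,u} (Fin n))
    (h : IsGB m (neuralIdeal Co) (canonicalForm (neuralIdeal Co))) :
    IsReducedGB m (neuralIdeal Co) (canonicalForm (neuralIdeal Co)) :=
  stmt10' (neuralIdeal Co) m h
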